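/- Let $1 < p < \infty$. There exists $\tau = \tau(p) \in (0, 1/2)$ such that if $\sigma$ and $\omega$ are $\tau$-doubling measures on $\mathbb{R}^n$, then the two-tailed Muckenhoupt characteristic is controlled by the scalar one: $\mathcal{A}_p(\sigma, \omega) \lesssim A_p(\sigma, \omega)$. -/

import Mathlib

open MeasureTheory Set ENNReal

/-- The axis-parallel half-open cube with corner `a` and sidelength `l`. -/
def cubeSet {n : ℕ} (a : Fin n → ℝ) (l : ℝ) : Set (Fin n → ℝ) :=
  {x | ∀ i, x i ∈ Set.Ico (a i) (a i + l)}

/-- The child of the cube with corner `a` and sidelength `l` selected by `ε`: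
one of the `2^n` subcubes of sidelength `l/2` obtained by halving along all
coordinate hyperplanes. -/
def childCube {n : ℕ} (a : Fin n → ℝ) (l : ℝ) (ε : Fin n → Bool) : Set (Fin n → ℝ) :=
  cubeSet (fun i => a i + (if ε i then l / 2 else 0)) (l / 2)

/-- A measure is `τ`-doubling: the measures of any two children of any cube are
within a factor `1 + τ` of each other. -/
def TauDoubling {n : ℕ} (μ : Measure (Fin n → ℝ)) (τ : ℝ) : Prop :=
  ∀ (a : Fin n → ℝ) (l : ℝ), 0 < l → ∀ ε₁ ε₂ : Fin n → Bool,
    μ (childCube a l ε₁) ≤ ENNReal.ofReal (1 + τ) * μ (childCube a l ε₂)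

/-- The scalar two-weight Muckenhoupt characteristic `A_p(σ,ω)`. -/
noncomputable def scalarAp (n : ℕ) (p p' : ℝ) (σ ω : Measure (Fin n → ℝ)) : ℝ≥0∞ :=
  ⨆ (a : Fin n → ℝ) (l : ℝ) (_ : 0 < l),
    (σ (cubeSet a l) / ENNReal.ofReal (l ^ n)) ^ (1 / p') *
    (ω (cubeSet a l) / ENNReal.ofReal (l ^ n)) ^ (1 / p)

/-- The two-tailed Muckenhoupt characteristic `𝒜_p(σ,ω)`. -/
noncomputable def tailedAp (n : ℕ) (p p' : ℝ) (σ ω : Measure (Fin n → ℝ)) : ℝ≥0∞ :=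
  ⨆ (a : Fin n → ℝ) (l : ℝ) (_ : 0 < l),
    ((ENNReal.ofReal (l ^ n))⁻¹ *
      ∫⁻ x, ENNReal.ofReal ((l ^ n / (l + Metric.infDist x (cubeSet a l)) ^ n) ^ p) ∂ω) ^ (1 / p) *
    ((ENNReal.ofReal (l ^ n))⁻¹ *
      ∫⁻ x, ENNReal.ofReal ((l ^ n / (l + Metric.infDist x (cubeSet a l)) ^ n) ^ p') ∂σ) ^ (1 / p')

namespace Stmt5Aux

/-! ### Combinatorial sequence of corner offsets -/

def eseq : ℕ → ℕ
  | 0 => 0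
  | k + 1 => eseq k + if Odd k then 2 ^ k else 0

lemma eseq_formula (k : ℕ) :
    (Even k → 3 * eseq k + 2 = 2 ^ (k + 1)) ∧ (Odd k → 3 * eseq k + 2 = 2 ^ k) := by
  induction k with
  | zero => simp [eseq]
  | succ k ih =>
    rcases Nat.even_or_odd k with hk | hk
    · have h1 : eseq (k + 1) = eseq k := by
        simp [eseq, Nat.not_odd_iff_even.mpr hk]
      constructor
      · intro h; exact absurd hk (Nat.even_add_one.mp h)
      · intro _; rw [h1]; exact ih.1 hk
    · have h1 : eseq (k + 1) = eseq k + 2 ^ k := by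
        simp [eseq, hk]
      constructor
      · intro _
        have h2 := ih.2 hk
        rw [h1]
        have h3 : 2 ^ (k + 1 + 1) = 4 * 2 ^ k := by ring
        omega
      · intro h
        exact absurd (Nat.not_odd_iff_even.mp (Nat.odd_add_one.mp h)) (Nat.not_even_iff_odd.mpr hk)

lemma eseq_lower {k : ℕ} (hk : 2 ≤ k) : 2 ^ k ≤ 6 * eseq k := by
  have h4 : 4 ≤ 2 ^ k := by
    calc (4:ℕ) = 2 ^ 2 := rfl
      _ ≤ 2 ^ k := Nat.pow_le_pow_right (by norm_num) hk
  rcases Nat.even_or_odd k with h | h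
  · have h1 := (eseq_formula k).1 h
    have h2 : 3 * eseq k + 2 = 2 * 2 ^ k := by rw [h1]; ring
    omega
  · have h1 := (eseq_formula k).2 h
    omega

lemma eseq_upper {k : ℕ} (hk : 2 ≤ k) : 6 * eseq k + 6 + 2 ^ k ≤ 6 * 2 ^ k := by
  have h4 : 4 ≤ 2 ^ k := by
    calc (4:ℕ) = 2 ^ 2 := rfl
      _ ≤ 2 ^ k := Nat.pow_le_pow_right (by norm_num) hk
  rcases Nat.even_or_odd k with h | h
  · have h1 := (eseq_formula k).1 h
    have h2 : 3 * eseq k + 2 = 2 * 2 ^ k := by rw [h1]; ring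
    omega
  · have h1 := (eseq_formula k).2 h
    omega

/-! ### Cube geometry -/

variable {n : ℕ}

lemma measurableSet_cubeSet (a : Fin n → ℝ) (l : ℝ) : MeasurableSet (cubeSet a l) := by
  have h : cubeSet a l = Set.pi Set.univ (fun i => Set.Ico (a i) (a i + l)) := by
    ext x; simp [cubeSet, Set.mem_pi]
  rw [h]
  exact MeasurableSet.univ_pi (fun i => measurableSet_Ico)

lemma child_subset {a : Fin n → ℝ} {L : ℝ} (hL : 0 ≤ L) (ε : Fin n → Bool) :
    childCube a L ε ⊆ cubeSet a L := by
  intro x hx i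
  have h := hx i
  dsimp only at h
  simp only [Set.mem_Ico] at h ⊢
  obtain ⟨h1, h2⟩ := h
  constructor
  · refine le_trans ?_ h1
    split <;> linarith
  · refine lt_of_lt_of_le h2 ?_
    split <;> linarith

lemma cube_subset_iUnion (a : Fin n → ℝ) (L : ℝ) :
    cubeSet a L ⊆ ⋃ ε : Fin n → Bool, childCube a L ε := by
  intro x hx
  refine Set.mem_iUnion.mpr ⟨fun i => decide (a i + L / 2 ≤ x i), fun i => ?_⟩
  rcases hx i with ⟨h1, h2⟩
  simp only [Set.mem_Ico, decide_eq_true_eq]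
  by_cases h : a i + L / 2 ≤ x i
  · rw [if_pos h]
    exact ⟨h, by linarith⟩
  · rw [if_neg h]
    push_neg at h
    exact ⟨by linarith, by linarith⟩

/-- The doubling constant. -/
noncomputable def Dc (n : ℕ) (τ : ℝ) : ℝ≥0∞ := 2 ^ n * ENNReal.ofReal (1 + τ)

lemma cube_le {μ : Measure (Fin n → ℝ)} {τ : ℝ} (hμ : TauDoubling μ τ)
    {a : Fin n → ℝ} {L : ℝ} (hL : 0 < L) (ε : Fin n → Bool) :
    μ (cubeSet a L) ≤ Dc n τ * μ (childCube a L ε) := by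
  calc μ (cubeSet a L) ≤ μ (⋃ ε' : Fin n → Bool, childCube a L ε') :=
        measure_mono (cube_subset_iUnion a L)
    _ ≤ ∑' ε' : Fin n → Bool, μ (childCube a L ε') := measure_iUnion_le _
    _ = ∑ ε' : Fin n → Bool, μ (childCube a L ε') := tsum_fintype _
    _ ≤ ∑ _ε' : Fin n → Bool, ENNReal.ofReal (1 + τ) * μ (childCube a L ε) :=
        Finset.sum_le_sum (fun ε' _ => hμ a L hL ε' ε)
    _ = (Fintype.card (Fin n → Bool) : ℝ≥0∞) * (ENNReal.ofReal (1 + τ) * μ (childCube a L ε)) := by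
        rw [Finset.sum_const, nsmul_eq_mul]; rfl
    _ = Dc n τ * μ (childCube a L ε) := by
        rw [Dc]
        have hc : ((Fintype.card (Fin n → Bool) : ℕ) : ℝ≥0∞) = 2 ^ n := by
          simp
        rw [hc, mul_assoc]

/-- The expanding chain of cubes. -/
def Pk (a : Fin n → ℝ) (l : ℝ) (k : ℕ) : Set (Fin n → ℝ) :=
  cubeSet (fun i => a i - l * eseq k) (2 ^ k * l)

lemma Pk_zero (a : Fin n → ℝ) (l : ℝ) : Pk a l 0 = cubeSet a l := by
  have h1 : (fun i => a i - l * ((eseq 0 : ℕ) : ℝ)) = a := by funext i; simp [eseq]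
  rw [Pk, h1]; norm_num

lemma Pk_succ_child (a : Fin n → ℝ) (l : ℝ) (k : ℕ) :
    Pk a l k = childCube (fun i => a i - l * eseq (k + 1)) (2 ^ (k + 1) * l)
      (fun _ => decide (Odd k)) := by
  have he : ((eseq (k + 1) : ℕ) : ℝ) = (eseq k : ℝ) + if Odd k then (2:ℝ) ^ k else 0 := by
    show ((eseq k + if Odd k then 2 ^ k else 0 : ℕ) : ℝ) = _
    push_cast
    split <;> simp
  have hlen : 2 ^ (k + 1) * l / 2 = 2 ^ k * l := by ring
  ext x
  simp only [Pk, childCube, cubeSet, Set.mem_setOf_eq, Set.mem_Ico, decide_eq_true_eq]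
  refine forall_congr' fun i => ?_
  have harith : a i - l * ((eseq (k + 1) : ℕ) : ℝ) +
      (if Odd k then 2 ^ (k + 1) * l / 2 else 0) = a i - l * ((eseq k : ℕ) : ℝ) := by
    rw [he]
    split <;> ring
  rw [harith, hlen]

lemma measure_Pk_le {μ : Measure (Fin n → ℝ)} {τ : ℝ} (hμ : TauDoubling μ τ)
    (a : Fin n → ℝ) {l : ℝ} (hl : 0 < l) (k : ℕ) :
    μ (Pk a l k) ≤ Dc n τ ^ k * μ (cubeSet a l) := by
  induction k with
  | zero => rw [Pk_zero]; simp
  | succ k ih =>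
    have h1 : μ (Pk a l (k + 1)) ≤ Dc n τ * μ (Pk a l k) := by
      rw [Pk]
      have h2 := cube_le hμ (a := fun i => a i - l * eseq (k + 1)) (L := 2 ^ (k + 1) * l)
        (by positivity) (fun _ => decide (Odd k))
      rwa [← Pk_succ_child] at h2
    calc μ (Pk a l (k + 1)) ≤ Dc n τ * μ (Pk a l k) := h1
      _ ≤ Dc n τ * (Dc n τ ^ k * μ (cubeSet a l)) := mul_le_mul_right ih _
      _ = Dc n τ ^ (k + 1) * μ (cubeSet a l) := by ring

lemma dist_lower {a : Fin n → ℝ} {l : ℝ} (hl : 0 < l) {k : ℕ} (hk : 2 ≤ k)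
    {x : Fin n → ℝ} (hx : x ∉ Pk a l k) :
    2 ^ k * l / 6 ≤ Metric.infDist x (cubeSet a l) := by
  have hQne : (cubeSet a l).Nonempty := ⟨a, fun i => ⟨le_refl _, by linarith⟩⟩
  by_contra hcon
  push_neg at hcon
  obtain ⟨y, hy, hlt⟩ := (Metric.infDist_lt_iff hQne).mp hcon
  refine absurd hlt (not_lt.mpr ?_)
  simp only [Pk, cubeSet, Set.mem_setOf_eq, Set.mem_Ico, not_forall] at hx
  obtain ⟨i, hi⟩ := hx
  rw [not_and_or, not_le, not_lt] at hi
  have hyi := hy i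
  rw [Set.mem_Ico] at hyi
  have hd : dist (x i) (y i) ≤ dist x y := dist_le_pi_dist x y i
  rw [Real.dist_eq] at hd
  have hel : (2:ℝ) ^ k ≤ 6 * (eseq k : ℝ) := by exact_mod_cast eseq_lower hk
  have heu : 6 * (eseq k : ℝ) + 6 + 2 ^ k ≤ 6 * 2 ^ k := by exact_mod_cast eseq_upper hk
  have hl6 : 2 ^ k * l / 6 ≤ |x i - y i| := by
    rcases hi with h | h
    · have h1 : l * (2 ^ k) ≤ l * (6 * (eseq k : ℝ)) :=
        mul_le_mul_of_nonneg_left hel (le_of_lt hl)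
      have h2 : 2 ^ k * l / 6 ≤ y i - x i := by nlinarith [hyi.1]
      calc 2 ^ k * l / 6 ≤ y i - x i := h2
        _ ≤ |x i - y i| := by rw [abs_sub_comm]; exact le_abs_self _
    · have h1 : l * (6 * (eseq k : ℝ) + 6 + 2 ^ k) ≤ l * (6 * 2 ^ k) :=
        mul_le_mul_of_nonneg_left heu (le_of_lt hl)
      have h2 : 2 ^ k * l / 6 ≤ x i - y i := by nlinarith [hyi.2]
      calc 2 ^ k * l / 6 ≤ x i - y i := h2
        _ ≤ |x i - y i| := le_abs_self _
  linarith

lemma exists_mem_Pk (a : Fin n → ℝ) {l : ℝ} (hl : 0 < l) (x : Fin n → ℝ) :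
    ∃ k, x ∈ Pk a l (k + 2) := by
  obtain ⟨m, hm⟩ := pow_unbounded_of_one_lt (6 * dist x a / l) (one_lt_two (α := ℝ))
  refine ⟨m, ?_⟩
  set k := m + 2 with hkdef
  have hk : 2 ≤ k := by omega
  simp only [Pk, cubeSet, Set.mem_setOf_eq, Set.mem_Ico]
  intro i
  have hmono : (2:ℝ) ^ m ≤ 2 ^ k := by
    apply pow_le_pow_right₀ one_le_two; omega
  have hdist : 6 * dist x a ≤ 2 ^ k * l := by
    rw [div_lt_iff₀ hl] at hm
    nlinarith [dist_nonneg (x := x) (y := a)]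
  have hdi : |x i - a i| ≤ dist x a := by
    rw [← Real.dist_eq]; exact dist_le_pi_dist x a i
  have habs := abs_le.mp hdi
  have hel : (2:ℝ) ^ k ≤ 6 * (eseq k : ℝ) := by exact_mod_cast eseq_lower hk
  have heu : 6 * (eseq k : ℝ) + 6 + 2 ^ k ≤ 6 * 2 ^ k := by exact_mod_cast eseq_upper hk
  constructor
  · have h1 : l * (2 ^ k) ≤ l * (6 * (eseq k : ℝ)) :=
      mul_le_mul_of_nonneg_left hel (le_of_lt hl)
    nlinarith
  · have h1 : l * (6 * (eseq k : ℝ) + 6 + 2 ^ k) ≤ l * (6 * 2 ^ k) :=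
      mul_le_mul_of_nonneg_left heu (le_of_lt hl)
    nlinarith

/-- The annular decomposition. -/
def Ak (a : Fin n → ℝ) (l : ℝ) : ℕ → Set (Fin n → ℝ)
  | 0 => Pk a l 2
  | k + 1 => Pk a l (k + 3) \ Pk a l (k + 2)

lemma iUnion_Ak (a : Fin n → ℝ) {l : ℝ} (hl : 0 < l) :
    ⋃ k, Ak a l k = Set.univ := by
  rw [Set.eq_univ_iff_forall]
  intro x
  have hex : ∃ k, x ∈ Pk a l (k + 2) := exists_mem_Pk a hl x
  classical
  rw [Set.mem_iUnion]
  rcases Nat.eq_zero_or_pos (Nat.find hex) with hm | hm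
  · refine ⟨0, ?_⟩
    have h0 := Nat.find_spec hex
    rw [hm] at h0
    exact h0
  · obtain ⟨j, hj⟩ : ∃ j, Nat.find hex = j + 1 :=
      ⟨Nat.find hex - 1, by omega⟩
    refine ⟨j + 1, ?_⟩
    have h1 : x ∈ Pk a l (Nat.find hex + 2) := Nat.find_spec hex
    have h2 : x ∉ Pk a l (j + 2) := Nat.find_min hex (by omega)
    rw [hj] at h1
    exact ⟨h1, h2⟩

/-- geometric ratio -/
noncomputable def rhoc (n : ℕ) (τ q : ℝ) : ℝ≥0∞ :=
  Dc n τ * ENNReal.ofReal (((2:ℝ) ^ ((n:ℝ) * q))⁻¹)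

/-- The constant in the tail bound. -/
noncomputable def Kq (n : ℕ) (τ q : ℝ) : ℝ≥0∞ :=
  Dc n τ ^ 2 + ENNReal.ofReal ((6:ℝ) ^ ((n:ℝ) * q)) * Dc n τ ^ 3 * (1 - rhoc n τ q)⁻¹

lemma Dc_pos (n : ℕ) {τ : ℝ} (hτ : 0 < τ) : 0 < Dc n τ := by
  rw [Dc]
  apply ENNReal.mul_pos
  · positivity
  · simp only [ne_eq, ENNReal.ofReal_eq_zero, not_le]
    linarith

lemma Dc_ne_top (n : ℕ) (τ : ℝ) : Dc n τ ≠ ⊤ :=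
  ENNReal.mul_ne_top (by simp) ENNReal.ofReal_ne_top

lemma Kq_pos (n : ℕ) {τ q : ℝ} (hτ : 0 < τ) : 0 < Kq n τ q := by
  have h := Dc_pos n hτ
  calc (0:ℝ≥0∞) < Dc n τ ^ 2 := by positivity
    _ ≤ Kq n τ q := le_self_add

lemma rhoc_lt_one {n : ℕ} (hn : 1 ≤ n) {τ q : ℝ} (hτ : 0 < τ) (hq : 1 < q)
    (hτq : 1 + τ < 2 ^ (q - 1)) : rhoc n τ q < 1 := by
  have h2n : (2:ℝ≥0∞) ^ n = ENNReal.ofReal ((2:ℝ) ^ n) := by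
    rw [ENNReal.ofReal_pow (by norm_num)]
    norm_num
  have hspos : (0:ℝ) < 2 ^ ((n:ℝ) * q) := Real.rpow_pos_of_pos two_pos _
  have hkey : (2:ℝ) ^ n * (1 + τ) < 2 ^ ((n:ℝ) * q) := by
    have hn1 : (1:ℝ) ≤ (n:ℝ) := by exact_mod_cast hn
    have ha : (2:ℝ) ^ (q - 1) ≤ 2 ^ ((n:ℝ) * (q - 1)) := by
      apply Real.rpow_le_rpow_of_exponent_le one_le_two
      nlinarith
    have hb : (2:ℝ) ^ ((n:ℝ) * (q - 1)) = 2 ^ ((n:ℝ) * q) / 2 ^ n := by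
      rw [mul_sub, mul_one, Real.rpow_sub two_pos, Real.rpow_natCast]
    have hc : 1 + τ < 2 ^ ((n:ℝ) * q) / 2 ^ n := by
      rw [← hb]; linarith
    have hpow : (0:ℝ) < 2 ^ n := by positivity
    rw [lt_div_iff₀ hpow] at hc
    linarith
  rw [rhoc, Dc, h2n, ← ENNReal.ofReal_mul (by positivity),
    ← ENNReal.ofReal_mul (by positivity), ← ENNReal.ofReal_one]
  apply (ENNReal.ofReal_lt_ofReal_iff_of_nonneg (by positivity)).2
  rw [mul_inv_lt_iff₀ hspos, one_mul]
  exact hkey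

lemma Kq_lt_top {n : ℕ} (hn : 1 ≤ n) {τ q : ℝ} (hτ : 0 < τ) (hq : 1 < q)
    (hτq : 1 + τ < 2 ^ (q - 1)) : Kq n τ q < ⊤ := by
  have hD := Dc_ne_top n τ
  have hρ := rhoc_lt_one hn hτ hq hτq
  rw [Kq]
  apply ENNReal.add_lt_top.mpr
  constructor
  · exact ENNReal.pow_lt_top (lt_top_iff_ne_top.mpr hD)
  · apply ENNReal.mul_lt_top
    · exact ENNReal.mul_lt_top ENNReal.ofReal_lt_top
        (ENNReal.pow_lt_top (lt_top_iff_ne_top.mpr hD))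
    · rw [lt_top_iff_ne_top, ne_eq, ENNReal.inv_eq_top]
      rw [← ne_eq, ← pos_iff_ne_zero]
      exact tsub_pos_iff_lt.mpr hρ

set_option maxHeartbeats 1000000 in
lemma tail_integral_le {μ : Measure (Fin n → ℝ)} {τ q : ℝ} (hμ : TauDoubling μ τ)
    (hq : 0 ≤ q) (a : Fin n → ℝ) {l : ℝ} (hl : 0 < l) :
    ∫⁻ x, ENNReal.ofReal ((l ^ n / (l + Metric.infDist x (cubeSet a l)) ^ n) ^ q) ∂μ
      ≤ Kq n τ q * μ (cubeSet a l) := by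
  set Q := cubeSet a l with hQ
  set f : (Fin n → ℝ) → ℝ≥0∞ :=
    fun x => ENNReal.ofReal ((l ^ n / (l + Metric.infDist x Q) ^ n) ^ q) with hf
  set D := Dc n τ with hD
  set s : ℝ := (2:ℝ) ^ ((n:ℝ) * q) with hs
  have hs1 : (1:ℝ) ≤ s := Real.one_le_rpow one_le_two (by positivity)
  have hspos : (0:ℝ) < s := by linarith
  set ρ : ℝ≥0∞ := rhoc n τ q with hρ
  set c : ℝ≥0∞ := ENNReal.ofReal ((6:ℝ) ^ ((n:ℝ) * q)) * D ^ 3 with hc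
  -- Pointwise bound: f ≤ 1
  have hf1 : ∀ x, f x ≤ 1 := by
    intro x
    rw [hf]
    refine ENNReal.ofReal_le_one.mpr ?_
    have hd0 : 0 ≤ Metric.infDist x Q := Metric.infDist_nonneg
    refine Real.rpow_le_one (by positivity) ?_ hq
    rw [div_le_one (by positivity)]
    exact pow_le_pow_left₀ (le_of_lt hl) (by linarith) n
  -- bound on the annuli
  have hAk : ∀ k : ℕ, ∫⁻ x in Ak a l (k + 1), f x ∂μ ≤ c * ρ ^ k * μ Q := by
    intro k
    have hmeasA : MeasurableSet (Ak a l (k + 1)) :=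
      (measurableSet_cubeSet _ _).diff (measurableSet_cubeSet _ _)
    set m : ℝ := 2 ^ (k + 2) * l / 6 with hm
    have hmpos : 0 < m := by positivity
    -- pointwise bound on the annulus
    have hpt : ∀ x ∈ Ak a l (k + 1), f x ≤ ENNReal.ofReal ((((6:ℝ) / 2 ^ (k + 2)) ^ n) ^ q) := by
      intro x hx
      have hxn : x ∉ Pk a l (k + 2) := hx.2
      have hdist : m ≤ Metric.infDist x Q := dist_lower hl (by omega) hxn
      rw [hf]
      apply ENNReal.ofReal_le_ofReal
      have hd0 : 0 ≤ Metric.infDist x Q := Metric.infDist_nonneg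
      refine Real.rpow_le_rpow (by positivity) ?_ hq
      have h1 : m ^ n ≤ (l + Metric.infDist x Q) ^ n :=
        pow_le_pow_left₀ (le_of_lt hmpos) (by linarith) n
      calc l ^ n / (l + Metric.infDist x Q) ^ n ≤ l ^ n / m ^ n := by
            apply div_le_div_of_nonneg_left (by positivity) (by positivity) h1
        _ = (l / m) ^ n := (div_pow l m n).symm
        _ = ((6:ℝ) / 2 ^ (k + 2)) ^ n := by
            have hlm : l / m = 6 / 2 ^ (k + 2) := by
              rw [hm]
              rw [div_div_eq_mul_div, div_eq_div_iff (by positivity) (by positivity)]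
              ring
            rw [hlm]
    -- integral bound
    have hint : ∫⁻ x in Ak a l (k + 1), f x ∂μ ≤
        ENNReal.ofReal ((((6:ℝ) / 2 ^ (k + 2)) ^ n) ^ q) * μ (Ak a l (k + 1)) := by
      calc ∫⁻ x in Ak a l (k + 1), f x ∂μ
          ≤ ∫⁻ _ in Ak a l (k + 1), ENNReal.ofReal ((((6:ℝ) / 2 ^ (k + 2)) ^ n) ^ q) ∂μ := by
            refine lintegral_mono_ae ?_
            rw [ae_restrict_iff' hmeasA]
            exact Filter.Eventually.of_forall hpt
        _ = ENNReal.ofReal ((((6:ℝ) / 2 ^ (k + 2)) ^ n) ^ q) * μ (Ak a l (k + 1)) :=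
            setLIntegral_const _ _
    -- constant manipulation
    have hconst : ENNReal.ofReal ((((6:ℝ) / 2 ^ (k + 2)) ^ n) ^ q) =
        ENNReal.ofReal ((6:ℝ) ^ ((n:ℝ) * q)) * (ENNReal.ofReal s⁻¹) ^ (k + 2) := by
      have h62 : (0:ℝ) ≤ (6:ℝ) / 2 ^ (k + 2) := by positivity
      have e1 : (((6:ℝ) / 2 ^ (k + 2)) ^ n) ^ q = ((6:ℝ) / 2 ^ (k + 2)) ^ ((n:ℝ) * q) := by
        rw [Real.rpow_mul h62, Real.rpow_natCast]
      have e2 : ((6:ℝ) / 2 ^ (k + 2)) ^ ((n:ℝ) * q) =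
          (6:ℝ) ^ ((n:ℝ) * q) / ((2:ℝ) ^ (k + 2)) ^ ((n:ℝ) * q) :=
        Real.div_rpow (by norm_num) (by positivity) _
      have e3 : ((2:ℝ) ^ (k + 2) : ℝ) ^ ((n:ℝ) * q) = s ^ (k + 2) := by
        rw [← Real.rpow_natCast (2:ℝ) (k + 2), ← Real.rpow_mul (by norm_num),
          mul_comm ((k + 2 : ℕ) : ℝ), Real.rpow_mul (by norm_num), hs,
          Real.rpow_natCast]
      rw [e1, e2, e3, div_eq_mul_inv, ← inv_pow,
        ENNReal.ofReal_mul (by positivity), ENNReal.ofReal_pow (by positivity)]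
    -- power comparison
    have hpow : (ENNReal.ofReal s⁻¹) ^ (k + 2) ≤ (ENNReal.ofReal s⁻¹) ^ k :=
      pow_le_pow_of_le_one (zero_le)
        (ENNReal.ofReal_le_one.mpr (inv_le_one_of_one_le₀ hs1)) (by omega)
    have hmeas : μ (Ak a l (k + 1)) ≤ D ^ (k + 3) * μ Q := by
      calc μ (Ak a l (k + 1)) ≤ μ (Pk a l (k + 3)) := measure_mono Set.diff_subset
        _ ≤ D ^ (k + 3) * μ Q := measure_Pk_le hμ a hl (k + 3)
    calc ∫⁻ x in Ak a l (k + 1), f x ∂μ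
        ≤ ENNReal.ofReal ((((6:ℝ) / 2 ^ (k + 2)) ^ n) ^ q) * μ (Ak a l (k + 1)) := hint
      _ ≤ ENNReal.ofReal ((((6:ℝ) / 2 ^ (k + 2)) ^ n) ^ q) * (D ^ (k + 3) * μ Q) :=
          mul_le_mul_right hmeas _
      _ = ENNReal.ofReal ((6:ℝ) ^ ((n:ℝ) * q)) * (ENNReal.ofReal s⁻¹) ^ (k + 2) *
          (D ^ (k + 3) * μ Q) := by rw [hconst]
      _ ≤ ENNReal.ofReal ((6:ℝ) ^ ((n:ℝ) * q)) * (ENNReal.ofReal s⁻¹) ^ k *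
          (D ^ (k + 3) * μ Q) := by
          exact mul_le_mul_left (mul_le_mul_right hpow _) _
      _ = c * (D * ENNReal.ofReal s⁻¹) ^ k * μ Q := by
          rw [hc, mul_pow]; ring
      _ = c * ρ ^ k * μ Q := by rw [hρ, rhoc, ← hD, ← hs]
  -- bound on the core
  have hA0 : ∫⁻ x in Ak a l 0, f x ∂μ ≤ D ^ 2 * μ Q := by
    calc ∫⁻ x in Ak a l 0, f x ∂μ ≤ ∫⁻ _ in Ak a l 0, 1 ∂μ := lintegral_mono hf1
      _ = μ (Ak a l 0) := by rw [setLIntegral_const, one_mul]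
      _ ≤ D ^ 2 * μ Q := measure_Pk_le hμ a hl 2
  -- assemble
  have hcover : ∫⁻ x, f x ∂μ ≤ ∑' k, ∫⁻ x in Ak a l k, f x ∂μ := by
    calc ∫⁻ x, f x ∂μ = ∫⁻ x in Set.univ, f x ∂μ := (setLIntegral_univ _).symm
      _ = ∫⁻ x in ⋃ k, Ak a l k, f x ∂μ := by rw [iUnion_Ak a hl]
      _ ≤ ∑' k, ∫⁻ x in Ak a l k, f x ∂μ := lintegral_iUnion_le _ _
  have hgeom : ∑' (j : ℕ), c * ρ ^ j * μ Q = c * (1 - ρ)⁻¹ * μ Q := by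
    rw [ENNReal.tsum_mul_right, ENNReal.tsum_mul_left, ENNReal.tsum_geometric]
  calc ∫⁻ x, f x ∂μ ≤ ∑' k, ∫⁻ x in Ak a l k, f x ∂μ := hcover
    _ = (∫⁻ x in Ak a l 0, f x ∂μ) + ∑' (j : ℕ), ∫⁻ x in Ak a l (j + 1), f x ∂μ :=
        tsum_eq_zero_add' ENNReal.summable
    _ ≤ D ^ 2 * μ Q + ∑' (j : ℕ), c * ρ ^ j * μ Q :=
        add_le_add hA0 (ENNReal.tsum_le_tsum hAk)
    _ = D ^ 2 * μ Q + c * (1 - ρ)⁻¹ * μ Q := by rw [hgeom]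
    _ = Kq n τ q * μ Q := by
        rw [Kq, ← hD, ← hρ, ← hc, add_mul]

end Stmt5Aux

/-- For `1 < p < ∞` there is `τ = τ(p) ∈ (0,1/2)` such that for all `τ`-doubling
measures `σ, ω`, one has `𝒜_p(σ,ω) ≲ A_p(σ,ω)`. -/
theorem stmt5 (n : ℕ) (hn : 1 ≤ n) (p p' : ℝ) (hp : 1 < p) (hpp' : 1 / p + 1 / p' = 1) :
    ∃ τ : ℝ, 0 < τ ∧ τ < 1 / 2 ∧
      ∃ C : ℝ≥0∞, 0 < C ∧ C < ∞ ∧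
        ∀ (σ ω : Measure (Fin n → ℝ)) [IsLocallyFiniteMeasure σ] [IsLocallyFiniteMeasure ω],
          TauDoubling σ τ → TauDoubling ω τ →
          tailedAp n p p' σ ω ≤ C * scalarAp n p p' σ ω := by
  have hp0 : 0 < p := lt_trans zero_lt_one hp
  have h1p0 : 0 < 1 / p := by positivity
  have h1p : 1 / p < 1 := by rw [div_lt_one hp0]; exact hp
  have hp'inv : 1 / p' = 1 - 1 / p := by linarith
  have hp'invpos : 0 < 1 / p' := by rw [hp'inv]; linarith
  have hp'0 : 0 < p' := by
    by_contra h
    push_neg at h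
    rcases eq_or_lt_of_le h with h' | h'
    · simp [h'] at hp'invpos
    · have : 1 / p' < 0 := div_neg_of_pos_of_neg one_pos h'
      linarith
  have hp'1 : 1 < p' := by
    have h2 : 1 / p' < 1 := by rw [hp'inv]; linarith
    exact (div_lt_one hp'0).mp h2
  set q0 := min p p' with hq0def
  have hq0 : 1 < q0 := lt_min hp hp'1
  have h2q0 : (1:ℝ) < 2 ^ (q0 - 1) := by
    have h := Real.rpow_lt_rpow_of_exponent_lt (x := 2) one_lt_two
      (y := 0) (z := q0 - 1) (by linarith)
    simpa using h
  set τ := min (1/4 : ℝ) ((2 ^ (q0 - 1) - 1) / 2) with hτdef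
  have hτpos : 0 < τ := lt_min (by norm_num) (by linarith)
  have hτhalf : τ < 1 / 2 := lt_of_le_of_lt (min_le_left _ _) (by norm_num)
  have hτq : ∀ q : ℝ, q0 ≤ q → 1 + τ < 2 ^ (q - 1) := by
    intro q hq
    have h1 : τ ≤ (2 ^ (q0 - 1) - 1) / 2 := min_le_right _ _
    have h2 : (2:ℝ) ^ (q0 - 1) ≤ 2 ^ (q - 1) :=
      Real.rpow_le_rpow_of_exponent_le one_le_two (by linarith)
    linarith
  have hτp : 1 + τ < 2 ^ (p - 1) := hτq p (min_le_left _ _)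
  have hτp' : 1 + τ < 2 ^ (p' - 1) := hτq p' (min_le_right _ _)
  have hKp_pos := Stmt5Aux.Kq_pos n (q := p) hτpos
  have hKp'_pos := Stmt5Aux.Kq_pos n (q := p') hτpos
  have hKp_top := Stmt5Aux.Kq_lt_top hn hτpos hp hτp
  have hKp'_top := Stmt5Aux.Kq_lt_top hn hτpos hp'1 hτp'
  refine ⟨τ, hτpos, hτhalf,
    Stmt5Aux.Kq n τ p ^ (1 / p) * Stmt5Aux.Kq n τ p' ^ (1 / p'), ?_, ?_, ?_⟩
  · apply ENNReal.mul_pos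
    · exact (ENNReal.rpow_pos hKp_pos hKp_top.ne).ne'
    · exact (ENNReal.rpow_pos hKp'_pos hKp'_top.ne).ne'
  · exact ENNReal.mul_lt_top
      (ENNReal.rpow_lt_top_of_nonneg (le_of_lt h1p0) hKp_top.ne)
      (ENNReal.rpow_lt_top_of_nonneg (le_of_lt hp'invpos) hKp'_top.ne)
  · intro σ ω _ _ hσ hω
    refine iSup_le fun a => iSup_le fun l => iSup_le fun hl => ?_
    set L := ENNReal.ofReal (l ^ n) with hL
    set Q := cubeSet a l with hQ
    have hIω := Stmt5Aux.tail_integral_le hω (le_of_lt hp0) a hl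
    have hIσ := Stmt5Aux.tail_integral_le hσ (le_of_lt hp'0) a hl
    have hXω : L⁻¹ * ∫⁻ x, ENNReal.ofReal ((l ^ n / (l + Metric.infDist x Q) ^ n) ^ p) ∂ω ≤
        Stmt5Aux.Kq n τ p * (ω Q / L) := by
      calc L⁻¹ * ∫⁻ x, ENNReal.ofReal ((l ^ n / (l + Metric.infDist x Q) ^ n) ^ p) ∂ω
          ≤ L⁻¹ * (Stmt5Aux.Kq n τ p * ω Q) := mul_le_mul_right hIω _
        _ = Stmt5Aux.Kq n τ p * (ω Q / L) := by rw [div_eq_mul_inv]; ring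
    have hXσ : L⁻¹ * ∫⁻ x, ENNReal.ofReal ((l ^ n / (l + Metric.infDist x Q) ^ n) ^ p') ∂σ ≤
        Stmt5Aux.Kq n τ p' * (σ Q / L) := by
      calc L⁻¹ * ∫⁻ x, ENNReal.ofReal ((l ^ n / (l + Metric.infDist x Q) ^ n) ^ p') ∂σ
          ≤ L⁻¹ * (Stmt5Aux.Kq n τ p' * σ Q) := mul_le_mul_right hIσ _
        _ = Stmt5Aux.Kq n τ p' * (σ Q / L) := by rw [div_eq_mul_inv]; ring
    have hsc : (σ Q / L) ^ (1 / p') * (ω Q / L) ^ (1 / p) ≤ scalarAp n p p' σ ω :=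
      le_iSup_of_le a (le_iSup_of_le l (le_iSup_of_le hl le_rfl))
    calc (L⁻¹ * ∫⁻ x, ENNReal.ofReal ((l ^ n / (l + Metric.infDist x Q) ^ n) ^ p) ∂ω) ^ (1 / p) *
        (L⁻¹ * ∫⁻ x, ENNReal.ofReal ((l ^ n / (l + Metric.infDist x Q) ^ n) ^ p') ∂σ) ^ (1 / p')
        ≤ (Stmt5Aux.Kq n τ p * (ω Q / L)) ^ (1 / p) *
          (Stmt5Aux.Kq n τ p' * (σ Q / L)) ^ (1 / p') :=
          mul_le_mul' (ENNReal.rpow_le_rpow hXω (le_of_lt h1p0))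
            (ENNReal.rpow_le_rpow hXσ (le_of_lt hp'invpos))
      _ = (Stmt5Aux.Kq n τ p ^ (1 / p) * Stmt5Aux.Kq n τ p' ^ (1 / p')) *
          ((σ Q / L) ^ (1 / p') * (ω Q / L) ^ (1 / p)) := by
          rw [ENNReal.mul_rpow_of_nonneg _ _ (le_of_lt h1p0),
            ENNReal.mul_rpow_of_nonneg _ _ (le_of_lt hp'invpos)]
          ring
      _ ≤ (Stmt5Aux.Kq n τ p ^ (1 / p) * Stmt5Aux.Kq n τ p' ^ (1 / p')) *
          scalarAp n p p' σ ω := mul_le_mul_right hsc _
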